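/- Let X be a finite set with semimetric ρ and uniform measure, and suppose: (i) the number of unordered r-antichains of order k+1 is at most β|X|^{k+1}/(k+1)!; (ii) the number of unordered r-antichains of order k is at least α|X|^k/k!. Let Z_1, ..., Z_n be the greedy cluster partition with cores X_i (X_i a maximum-size 2r-cluster in the remaining space, Z_i its open r-neighborhood there), and let I_1 = {i : (k+1)|X_i| ≤ |Z_i|}. Then ∑_{i ∈ I_1} |Z_i| ≤ ((k+1)β/α)·|X|. -/

import Mathlib

/-- For the greedy cluster partition with cores X_i and parts Z_i, the parts
with `(k+1)|X_i| ≤ |Z_i|` have total size at most `(k+1)β/α · |X|`. -/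
theorem stmt_11 {ι : Type*} [Fintype ι] (r α β : ℝ) (k n : ℕ)
    (hr : 0 < r) (hα : 0 < α) (hβ : 0 < β) (hk : 1 ≤ k)
    (ρ : ι → ι → ℝ)
    (hsymm : ∀ x y, ρ x y = ρ y x) (hrefl : ∀ x, ρ x x = 0)
    (htri : ∀ x y z, ρ x z ≤ ρ x y + ρ y z)
    (Xc Z : Fin n → Finset ι)
    (hXZ : ∀ m, Xc m ⊆ Z m)
    (hdiam : ∀ m, ∀ x ∈ Xc m, ∀ y ∈ Xc m, ρ x y ≤ 2 * r)
    (hmax : ∀ m : Fin n, ∀ C : Finset ι,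
      (∀ x ∈ C, ∀ i, i < m → x ∉ Z i) →
      (∀ x ∈ C, ∀ y ∈ C, ρ x y ≤ 2 * r) → C.card ≤ (Xc m).card)
    (hZ : ∀ m : Fin n, ∀ x : ι,
      x ∈ Z m ↔ ((∀ i, i < m → x ∉ Z i) ∧ ∃ y ∈ Xc m, ρ x y < r))
    (hcover : ∀ x : ι, ∃ m, x ∈ Z m)
    (hT1 : (Set.ncard {S : Finset ι | S.card = k + 1 ∧
        ∀ x ∈ S, ∀ y ∈ S, x ≠ y → r < ρ x y} : ℝ)
      ≤ β * (Fintype.card ι : ℝ) ^ (k + 1) / (Nat.factorial (k + 1) : ℝ))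
    (hT2 : α * (Fintype.card ι : ℝ) ^ k / (Nat.factorial k : ℝ)
      ≤ (Set.ncard {S : Finset ι | S.card = k ∧
        ∀ x ∈ S, ∀ y ∈ S, x ≠ y → r < ρ x y} : ℝ)) :
    ∑ i ∈ Finset.univ.filter
        (fun i : Fin n => (k + 1) * (Xc i).card ≤ (Z i).card),
      ((Z i).card : ℝ)
    ≤ (k + 1) * β / α * (Fintype.card ι : ℝ) := by
  classical
  set N : ℕ := Fintype.card ι with hNdef
  -- case N = 0
  rcases Nat.eq_zero_or_pos N with hN0 | hNpos
  · have : ∀ i : Fin n, (Z i).card = 0 := by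
      intro i
      have := Finset.card_le_card (Finset.subset_univ (Z i))
      simpa [Finset.card_univ, ← hNdef, hN0] using this
    rw [hN0]
    simp [this]
  -- antichain finsets
  set I1 : Finset (Fin n) :=
    Finset.univ.filter (fun i : Fin n => (k + 1) * (Xc i).card ≤ (Z i).card) with hI1def
  set Ak : Finset (Finset ι) := Finset.univ.filter
    (fun S : Finset ι => S.card = k ∧ ∀ x ∈ S, ∀ y ∈ S, x ≠ y → r < ρ x y) with hAkdef
  set Ak1 : Finset (Finset ι) := Finset.univ.filter
    (fun S : Finset ι => S.card = k + 1 ∧ ∀ x ∈ S, ∀ y ∈ S, x ≠ y → r < ρ x y) with hAk1def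
  have hAkcard : α * (N : ℝ) ^ k / (Nat.factorial k : ℝ) ≤ (Ak.card : ℝ) := by
    refine le_trans hT2 (le_of_eq ?_)
    congr 1
    rw [← Set.ncard_coe_finset]
    congr 1
    ext S
    simp [hAkdef]
  have hAk1card : (Ak1.card : ℝ) ≤ β * (N : ℝ) ^ (k + 1) / (Nat.factorial (k + 1) : ℝ) := by
    refine le_trans (le_of_eq ?_) hT1
    congr 1
    rw [← Set.ncard_coe_finset]
    congr 1
    ext S
    simp [hAk1def]
  -- disjointness of the parts
  have hdisj : ∀ i j : Fin n, i ≠ j → Disjoint (Z i) (Z j) := by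
    have key : ∀ i j : Fin n, i < j → Disjoint (Z i) (Z j) := by
      intro i j hij
      rw [Finset.disjoint_left]
      intro z hzi hzj
      exact ((hZ j z).1 hzj).1 i hij hzi
    intro i j hij
    rcases lt_or_gt_of_ne hij with h | h
    · exact key i j h
    · exact (key j i h).symm
  -- ball bound
  have hball : ∀ (i : Fin n) (a : ι),
      ((Z i).filter (fun z => ρ z a ≤ r)).card ≤ (Xc i).card := by
    intro i a
    apply hmax i
    · intro x hx j hj
      exact ((hZ i x).1 (Finset.mem_filter.mp hx).1).1 j hj
    · intro x hx y hy
      have hxa := (Finset.mem_filter.mp hx).2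
      have hya := (Finset.mem_filter.mp hy).2
      calc ρ x y ≤ ρ x a + ρ a y := htri x a y
        _ = ρ x a + ρ y a := by rw [hsymm a y]
        _ ≤ r + r := add_le_add hxa hya
        _ = 2 * r := by ring
  -- good points count
  have hgood : ∀ S : Finset ι, S.card = k → ∀ i ∈ I1,
      (Z i).card ≤ (k + 1) * ((Z i).filter (fun z => ∀ a ∈ S, r < ρ z a)).card := by
    intro S hS i hi
    have hi' : (k + 1) * (Xc i).card ≤ (Z i).card := by
      simpa [hI1def] using hi
    set G := (Z i).filter (fun z => ∀ a ∈ S, r < ρ z a) with hG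
    set B := (Z i).filter (fun z => ¬ ∀ a ∈ S, r < ρ z a) with hB
    have hGB : G.card + B.card = (Z i).card :=
      Finset.card_filter_add_card_filter_not _
    have hBsub : B ⊆ S.biUnion (fun a => (Z i).filter (fun z => ρ z a ≤ r)) := by
      intro z hz
      rw [hB, Finset.mem_filter] at hz
      obtain ⟨hzZ, hz2⟩ := hz
      push_neg at hz2
      obtain ⟨a, haS, ha⟩ := hz2
      exact Finset.mem_biUnion.2 ⟨a, haS, Finset.mem_filter.2 ⟨hzZ, ha⟩⟩
    have hBle : B.card ≤ k * (Xc i).card := by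
      calc B.card ≤ (S.biUnion (fun a => (Z i).filter (fun z => ρ z a ≤ r))).card :=
            Finset.card_le_card hBsub
        _ ≤ ∑ a ∈ S, ((Z i).filter (fun z => ρ z a ≤ r)).card := Finset.card_biUnion_le
        _ ≤ ∑ a ∈ S, (Xc i).card := Finset.sum_le_sum (fun a _ => hball i a)
        _ = k * (Xc i).card := by rw [Finset.sum_const, hS, smul_eq_mul]
    -- (k+1)*B ≤ k*(G+B) hence B ≤ k*G hence |Z i| = G + B ≤ (k+1)*G
    have h1 : (k + 1) * B.card ≤ k * (G.card + B.card) := by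
      calc (k + 1) * B.card ≤ (k + 1) * (k * (Xc i).card) :=
            Nat.mul_le_mul_left _ hBle
        _ = k * ((k + 1) * (Xc i).card) := by ring
        _ ≤ k * (G.card + B.card) := by
            exact Nat.mul_le_mul_left _ (hGB ▸ hi')
    have h2 : B.card ≤ k * G.card := by
      have : k * B.card + B.card ≤ k * G.card + k * B.card := by
        calc k * B.card + B.card = (k + 1) * B.card := by ring
          _ ≤ k * (G.card + B.card) := h1
          _ = k * G.card + k * B.card := by ring
      omega
    calc (Z i).card = G.card + B.card := hGB.symm
      _ ≤ G.card + k * G.card := by omega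
      _ = (k + 1) * G.card := by ring
  -- the pair set
  set M : ℕ := ∑ i ∈ I1, (Z i).card with hMdef
  set fib : Finset ι → Finset ι :=
    (fun S => I1.biUnion (fun i => (Z i).filter (fun z => ∀ a ∈ S, r < ρ z a))) with hfibdef
  have hfibcard : ∀ S ∈ Ak, M ≤ (k + 1) * (fib S).card := by
    intro S hSmem
    have hScard : S.card = k := ((Finset.mem_filter.mp hSmem).2).1
    have : (fib S).card = ∑ i ∈ I1, ((Z i).filter (fun z => ∀ a ∈ S, r < ρ z a)).card := by
      rw [hfibdef]
      exact Finset.card_biUnion (fun i _ j _ hij =>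
        Finset.disjoint_filter_filter (hdisj i j hij))
    rw [this, Finset.mul_sum, hMdef]
    exact Finset.sum_le_sum (fun i hi => hgood S hScard i hi)
  set P : Finset (Finset ι × ι) :=
    Ak.biUnion (fun S => (fib S).image (fun z => (S, z))) with hPdef
  have hPcard : Ak.card * M ≤ (k + 1) * P.card := by
    have hPc : P.card = ∑ S ∈ Ak, (fib S).card := by
      rw [hPdef]
      rw [Finset.card_biUnion]
      · refine Finset.sum_congr rfl (fun S _ => ?_)
        exact Finset.card_image_of_injective _ (fun a b hab => (Prod.mk.injEq _ _ _ _ ▸ hab).2)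
      · intro S _ T _ hST
        rw [Function.onFun, Finset.disjoint_left]
        rintro p hp hp'
        simp only [Finset.mem_image] at hp hp'
        obtain ⟨z, _, rfl⟩ := hp
        obtain ⟨w, _, hw⟩ := hp'
        exact hST ((Prod.mk.injEq _ _ _ _ ▸ hw).1).symm
    calc Ak.card * M = ∑ _S ∈ Ak, M := by rw [Finset.sum_const, smul_eq_mul]
      _ ≤ ∑ S ∈ Ak, (k + 1) * (fib S).card := Finset.sum_le_sum hfibcard
      _ = (k + 1) * ∑ S ∈ Ak, (fib S).card := (Finset.mul_sum _ _ _).symm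
      _ = (k + 1) * P.card := by rw [hPc]
  -- structure of members of P
  have hPmem : ∀ p ∈ P, p.1 ∈ Ak ∧ p.2 ∉ p.1 ∧ (∀ a ∈ p.1, r < ρ p.2 a) := by
    rintro ⟨S, z⟩ hp
    rw [hPdef, Finset.mem_biUnion] at hp
    obtain ⟨T, hT, hmem⟩ := hp
    rw [Finset.mem_image] at hmem
    obtain ⟨w, hw, hwz⟩ := hmem
    obtain ⟨hT1', hT2'⟩ := Prod.mk.injEq _ _ _ _ ▸ hwz
    subst hT1'; subst hT2'
    rw [hfibdef, Finset.mem_biUnion] at hw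
    obtain ⟨i, _, hwZ⟩ := hw
    have hgood' := (Finset.mem_filter.mp hwZ).2
    refine ⟨hT, ?_, hgood'⟩
    intro hzS
    have := hgood' _ hzS
    rw [hrefl] at this
    linarith
  -- upper bound : P.card ≤ (k+1) * Ak1.card
  have hPup : P.card ≤ (k + 1) * Ak1.card := by
    have himg : P.image (fun p => insert p.2 p.1) ⊆ Ak1 := by
      intro T hT
      rw [Finset.mem_image] at hT
      obtain ⟨p, hp, rfl⟩ := hT
      obtain ⟨hS, hzS, hgood'⟩ := hPmem p hp
      obtain ⟨hScard, hSanti⟩ := (Finset.mem_filter.mp hS).2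
      rw [hAk1def, Finset.mem_filter]
      refine ⟨Finset.mem_univ _, ?_, ?_⟩
      · rw [Finset.card_insert_of_notMem hzS, hScard]
      · intro x hx y hy hxy
        rw [Finset.mem_insert] at hx hy
        rcases hx with rfl | hx
        · rcases hy with rfl | hy
          · exact absurd rfl hxy
          · exact hgood' y hy
        · rcases hy with rfl | hy
          · rw [hsymm]; exact hgood' x hx
          · exact hSanti x hx y hy hxy
    have hfiber : ∀ T ∈ P.image (fun p => insert p.2 p.1),
        (P.filter (fun p => insert p.2 p.1 = T)).card ≤ k + 1 := by
      intro T hT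
      rw [Finset.mem_image] at hT
      obtain ⟨p0, hp0, hTp0⟩ := hT
      have hTcard : T.card = k + 1 := by
        obtain ⟨hS, hzS, _⟩ := hPmem p0 hp0
        rw [← hTp0, Finset.card_insert_of_notMem hzS,
          ((Finset.mem_filter.mp hS).2).1]
      calc (P.filter (fun p => insert p.2 p.1 = T)).card ≤ T.card := by
            apply Finset.card_le_card_of_injOn (fun p => p.2)
            · intro p hp
              have := (Finset.mem_filter.mp hp).2
              rw [← this]
              exact Finset.mem_insert_self _ _
            · intro p hp q hq hpq
              simp only [Finset.coe_filter, Set.mem_setOf_eq] at hp hq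
              obtain ⟨hpP, hpT⟩ := hp
              obtain ⟨hqP, hqT⟩ := hq
              have hp1 : p.1 = T.erase p.2 := by
                rw [← hpT, Finset.erase_insert (hPmem p hpP).2.1]
              have hq1 : q.1 = T.erase q.2 := by
                rw [← hqT, Finset.erase_insert (hPmem q hqP).2.1]
              have hpq' : p.2 = q.2 := hpq
              exact Prod.ext (by rw [hp1, hq1, hpq']) hpq'
        _ = k + 1 := hTcard
    calc P.card ≤ (k + 1) * (P.image (fun p => insert p.2 p.1)).card :=
          Finset.card_le_mul_card_image P (k + 1) hfiber
      _ ≤ (k + 1) * Ak1.card := Nat.mul_le_mul_left _ (Finset.card_le_card himg)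
  -- combine in ℕ
  have hkey : Ak.card * M ≤ (k + 1) * ((k + 1) * Ak1.card) :=
    le_trans hPcard (Nat.mul_le_mul_left _ hPup)
  -- now cast and finish
  have hLHS : ∑ i ∈ I1, ((Z i).card : ℝ) = (M : ℝ) := by
    rw [hMdef, Nat.cast_sum]
  rw [hLHS]
  -- real arithmetic
  have hNk : (0 : ℝ) < (N : ℝ) ^ k := by positivity
  have hfk : (0 : ℝ) < (Nat.factorial k : ℝ) := by positivity
  have hkeyR : (Ak.card : ℝ) * M ≤ ((k : ℝ) + 1) ^ 2 * Ak1.card := by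
    have : ((Ak.card * M : ℕ) : ℝ) ≤ (((k + 1) * ((k + 1) * Ak1.card) : ℕ) : ℝ) :=
      Nat.cast_le.mpr hkey
    push_cast at this
    nlinarith [this]
  have hchain : α * (N : ℝ) ^ k / (Nat.factorial k : ℝ) * M
      ≤ ((k : ℝ) + 1) ^ 2 * (β * (N : ℝ) ^ (k + 1) / (Nat.factorial (k + 1) : ℝ)) := by
    have hM0 : (0 : ℝ) ≤ (M : ℝ) := Nat.cast_nonneg _
    have h1 : α * (N : ℝ) ^ k / (Nat.factorial k : ℝ) * M ≤ (Ak.card : ℝ) * M :=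
      mul_le_mul_of_nonneg_right hAkcard hM0
    have h2 : ((k : ℝ) + 1) ^ 2 * (Ak1.card : ℝ)
        ≤ ((k : ℝ) + 1) ^ 2 * (β * (N : ℝ) ^ (k + 1) / (Nat.factorial (k + 1) : ℝ)) :=
      mul_le_mul_of_nonneg_left hAk1card (by positivity)
    linarith
  -- simplify RHS of hchain
  have hfacsucc : (Nat.factorial (k + 1) : ℝ) = ((k : ℝ) + 1) * (Nat.factorial k : ℝ) := by
    rw [Nat.factorial_succ]; push_cast; ring
  have hfinal : α * (N : ℝ) ^ k * M ≤ ((k : ℝ) + 1) * β * (N : ℝ) ^ k * N := by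
    have hexp : ((k : ℝ) + 1) ^ 2 * (β * (N : ℝ) ^ (k + 1) / (Nat.factorial (k + 1) : ℝ))
        = ((k : ℝ) + 1) * β * (N : ℝ) ^ k * N / (Nat.factorial k : ℝ) := by
      rw [hfacsucc, pow_succ]
      field_simp
      ring
    rw [hexp] at hchain
    have := mul_le_mul_of_nonneg_right hchain (le_of_lt hfk)
    calc α * (N : ℝ) ^ k * M
        = α * (N : ℝ) ^ k / (Nat.factorial k : ℝ) * M * (Nat.factorial k : ℝ) := by
          field_simp
      _ ≤ ((k : ℝ) + 1) * β * (N : ℝ) ^ k * N / (Nat.factorial k : ℝ) * (Nat.factorial k : ℝ) := this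
      _ = ((k : ℝ) + 1) * β * (N : ℝ) ^ k * N := by field_simp
  -- cancel N^k and α
  rw [div_mul_eq_mul_div, le_div_iff₀ hα]
  have hmul : (M : ℝ) * α * (N : ℝ) ^ k ≤ ((k : ℝ) + 1) * β * (N : ℝ) * (N : ℝ) ^ k := by
    calc (M : ℝ) * α * (N : ℝ) ^ k = α * (N : ℝ) ^ k * M := by ring
      _ ≤ ((k : ℝ) + 1) * β * (N : ℝ) ^ k * N := hfinal
      _ = ((k : ℝ) + 1) * β * (N : ℝ) * (N : ℝ) ^ k := by ring
  exact le_of_mul_le_mul_right hmul hNk
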